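/- Let f be 5 times continuously differentiable near x_{j+1/2} = x_j + Δx/2. Define β₀ and β₃ as in the WENO-NS7 scheme with parameters ξ₁, ξ₂ ∈ (0,1]. Then ζ = |β₀ - β₃|² = O(Δx⁸) as Δx → 0⁺ whenever f'(x_{j+1/2}), f''(x_{j+1/2}), f'''(x_{j+1/2}) do not change the sign pattern entering the absolute values; in particular, if f', f'', f''' are all nonzero at x_{j+1/2}, there exists C with ζ ≤ C·Δx⁸ for all sufficiently small Δx > 0. -/

import Mathlib

open Set

set_option maxHeartbeats 1000000
set_option linter.unusedVariables false


private lemma iterWithin_open_eq {f : ℝ → ℝ} {s : Set ℝ} (hs : IsOpen s) (m : ℕ) {x : ℝ}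
    (hx : x ∈ s) : iteratedDerivWithin m f s x = iteratedDeriv m f x := by
  simp only [iteratedDerivWithin_eq_iteratedFDerivWithin, iteratedDeriv_eq_iteratedFDeriv,
    iteratedFDerivWithin_of_isOpen m hs hx]

private lemma diffAt_iteratedDeriv {f : ℝ → ℝ} {s : Set ℝ} (hs : IsOpen s)
    (hf : ContDiffOn ℝ 5 f s) {m : ℕ} (hm : m < 5) {x : ℝ} (hx : x ∈ s) :
    DifferentiableAt ℝ (iteratedDeriv m f) x := by
  have h1 : DifferentiableOn ℝ (iteratedDerivWithin m f s) s :=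
    hf.differentiableOn_iteratedDerivWithin (by exact_mod_cast hm) hs.uniqueDiffOn
  have h2 : DifferentiableAt ℝ (iteratedDerivWithin m f s) x :=
    (h1 x hx).differentiableAt (hs.mem_nhds hx)
  have he : iteratedDerivWithin m f s =ᶠ[nhds x] iteratedDeriv m f :=
    Filter.eventuallyEq_of_mem (hs.mem_nhds hx) (fun y hy => iterWithin_open_eq hs m hy)
  exact he.differentiableAt_iff.mp h2

private lemma iter_Icc_eq {f : ℝ → ℝ} {s : Set ℝ} (hs : IsOpen s) (hf : ContDiffOn ℝ 5 f s)
    {a b : ℝ} (hab : a < b) (hsub : Icc a b ⊆ s) :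
    ∀ m : ℕ, m ≤ 4 → ∀ y ∈ Icc a b, iteratedDerivWithin m f (Icc a b) y = iteratedDeriv m f y := by
  intro m
  induction m with
  | zero => intro _ y _; simp
  | succ n IH =>
    intro hm y hy
    have hn : n ≤ 4 := le_trans (Nat.le_succ n) hm
    have hn5 : n < 5 := by omega
    rw [iteratedDerivWithin_succ,
      derivWithin_congr (fun z hz => IH hn z hz) (IH hn y hy),
      DifferentiableAt.derivWithin (diffAt_iteratedDeriv hs hf hn5 (hsub hy))
        ((uniqueDiffOn_Icc hab) y hy), ← iteratedDeriv_succ]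


private lemma taylor_right {f : ℝ → ℝ} {s : Set ℝ} (hs : IsOpen s) (hf : ContDiffOn ℝ 5 f s)
    {a b : ℝ} (hab : a < b) (hsub : Icc a b ⊆ s) :
    ∃ M : ℝ, ∀ x ∈ Icc a b, |f x - (f a + iteratedDeriv 1 f a * (x - a)
      + iteratedDeriv 2 f a * (x - a)^2 / 2 + iteratedDeriv 3 f a * (x - a)^3 / 6)|
      ≤ M * (x - a)^4 := by
  have hf4 : ContDiffOn ℝ 4 f (Icc a b) := (hf.mono hsub).of_le (by norm_num)
  have hcont : ContinuousOn (iteratedDerivWithin 4 f (Icc a b)) (Icc a b) :=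
    hf4.continuousOn_iteratedDerivWithin (by norm_num) (uniqueDiffOn_Icc hab)
  obtain ⟨C, hC⟩ := isCompact_Icc.exists_bound_of_continuousOn hcont
  refine ⟨C / 6, fun x hx => ?_⟩
  have hf4' : ContDiffOn ℝ (3 + 1 : ℕ) f (Icc a b) := by exact_mod_cast hf4
  have hbd := taylor_mean_remainder_bound (n := 3) (le_of_lt hab) hf4' hx
    (fun y hy => hC y hy)
  rw [taylor_within_apply] at hbd
  have e0 := iter_Icc_eq hs hf hab hsub 0 (by norm_num) a (left_mem_Icc.mpr hab.le)
  have e1 := iter_Icc_eq hs hf hab hsub 1 (by norm_num) a (left_mem_Icc.mpr hab.le)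
  have e2 := iter_Icc_eq hs hf hab hsub 2 (by norm_num) a (left_mem_Icc.mpr hab.le)
  have e3 := iter_Icc_eq hs hf hab hsub 3 (by norm_num) a (left_mem_Icc.mpr hab.le)
  simp only [Finset.sum_range_succ, Finset.sum_range_zero, e0, e1, e2, e3,
    iteratedDeriv_zero, smul_eq_mul, Real.norm_eq_abs] at hbd
  calc |f x - (f a + iteratedDeriv 1 f a * (x - a) + iteratedDeriv 2 f a * (x - a)^2 / 2
        + iteratedDeriv 3 f a * (x - a)^3 / 6)|
      = |f x - (0 + ((Nat.factorial 0 : ℕ) : ℝ)⁻¹ * (x - a) ^ 0 * f a + ((Nat.factorial 1 : ℕ) : ℝ)⁻¹ * (x - a) ^ 1 * iteratedDeriv 1 f a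
        + ((Nat.factorial 2 : ℕ) : ℝ)⁻¹ * (x - a) ^ 2 * iteratedDeriv 2 f a
        + ((Nat.factorial 3 : ℕ) : ℝ)⁻¹ * (x - a) ^ 3 * iteratedDeriv 3 f a)| := by
        norm_num [Nat.factorial]; ring_nf
    _ ≤ C * (x - a) ^ (3 + 1) / Nat.factorial 3 := hbd
    _ = C / 6 * (x - a) ^ 4 := by norm_num [Nat.factorial]; ring


private lemma taylor_two_sided {f : ℝ → ℝ} {s : Set ℝ} (hs : IsOpen s) (hf : ContDiffOn ℝ 5 f s)
    {a : ℝ} (ha : a ∈ s) :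
    ∃ M r : ℝ, 0 < r ∧ ∀ t : ℝ, |t| ≤ r →
      |f (a + t) - (f a + iteratedDeriv 1 f a * t + iteratedDeriv 2 f a * t^2 / 2
        + iteratedDeriv 3 f a * t^3 / 6)| ≤ M * t^4 := by
  obtain ⟨ε, hε, hball⟩ := Metric.isOpen_iff.mp hs a ha
  set r := ε / 2 with hr
  have hrpos : 0 < r := by positivity
  have hIccR : Icc a (a + r) ⊆ s := fun y hy => hball (by
    simp only [Metric.mem_ball, Real.dist_eq]
    rw [abs_of_nonneg (by linarith [hy.1])]
    have := hy.2; simp only [hr] at *; linarith)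
  -- reflected function
  set g : ℝ → ℝ := fun u => f (2 * a + -u) with hg
  set s' : Set ℝ := (fun u : ℝ => 2 * a + -u) ⁻¹' s with hs'
  have hs'open : IsOpen s' := hs.preimage (by continuity)
  have hgs : ContDiffOn ℝ 5 g s' :=
    hf.comp ((contDiff_const.add contDiff_neg).contDiffOn) (fun x hx => hx)
  have hIccL : Icc a (a + r) ⊆ s' := by
    intro y hy
    simp only [hs', mem_preimage]
    apply hball
    simp only [Metric.mem_ball, Real.dist_eq]
    have h1 := hy.1; have h2 := hy.2
    rw [show 2 * a + -y - a = -(y - a) by ring, abs_neg, abs_of_nonneg (by linarith)]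
    simp only [hr] at *; linarith
  -- iterated derivatives of g at a
  have hgk : ∀ k : ℕ, iteratedDeriv k g a = (-1 : ℝ) ^ k * iteratedDeriv k f a := by
    intro k
    have h1 : iteratedDeriv k g a = (-1 : ℝ) ^ k • iteratedDeriv k (fun v => f (2 * a + v)) (-a) :=
      iteratedDeriv_comp_neg k (fun v => f (2 * a + v)) a
    rw [h1, iteratedDeriv_comp_const_add k f (2 * a)]
    simp only [smul_eq_mul]
    rw [show 2 * a + -a = a by ring]
  obtain ⟨Mr, hMr⟩ := taylor_right hs hf (by linarith : a < a + r) hIccR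
  obtain ⟨Ml, hMl⟩ := taylor_right hs'open hgs (by linarith : a < a + r) hIccL
  refine ⟨max Mr Ml, r, hrpos, fun t ht => ?_⟩
  rcases le_or_gt 0 t with h0 | h0
  · have hx : a + t ∈ Icc a (a + r) := by
      constructor <;> [linarith; (rw [abs_of_nonneg h0] at ht; linarith)]
    have := hMr (a + t) hx
    rw [show a + t - a = t by ring] at this
    refine this.trans ?_
    have : t ^ 4 ≥ 0 := by positivity
    nlinarith [le_max_left Mr Ml]
  · have hx : a + (-t) ∈ Icc a (a + r) := by
      constructor <;> [linarith; (rw [abs_of_neg h0] at ht; linarith)]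
    have hb := hMl (a + (-t)) hx
    rw [show a + -t - a = -t by ring] at hb
    have hga : g a = f a := by simp only [hg]; rw [show 2 * a + -a = a by ring]
    have hgt : g (a + -t) = f (a + t) := by simp only [hg]; rw [show 2 * a + -(a + -t) = a + t by ring]
    rw [hgt, hga, hgk 1, hgk 2, hgk 3] at hb
    have heq : f (a + t) - (f a + (-1 : ℝ)^1 * iteratedDeriv 1 f a * (-t)
        + (-1 : ℝ)^2 * iteratedDeriv 2 f a * (-t)^2 / 2
        + (-1 : ℝ)^3 * iteratedDeriv 3 f a * (-t)^3 / 6)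
        = f (a + t) - (f a + iteratedDeriv 1 f a * t + iteratedDeriv 2 f a * t^2 / 2
        + iteratedDeriv 3 f a * t^3 / 6) := by ring
    rw [heq, show (-t : ℝ)^4 = t^4 by ring] at hb
    refine hb.trans ?_
    have : t ^ 4 ≥ 0 := by positivity
    nlinarith [le_max_right Mr Ml]


theorem weno7_global_indicator_eighth_order
    (f : ℝ → ℝ) (xj : ℝ) (ξ₁ ξ₂ : ℝ)
    (hξ₁ : ξ₁ ∈ Set.Ioc (0:ℝ) 1) (hξ₂ : ξ₂ ∈ Set.Ioc (0:ℝ) 1)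
    (hf : ∃ s : Set ℝ, IsOpen s ∧ xj ∈ s ∧ ContDiffOn ℝ 5 f s)
    (h1 : deriv f xj ≠ 0) (h2 : iteratedDeriv 2 f xj ≠ 0)
    (h3 : iteratedDeriv 3 f xj ≠ 0)
    (β₀ β₃ : ℝ → ℝ)
    (hβ₀ : ∀ Δx : ℝ, β₀ Δx =
      ξ₁ * |(1/24) * (-23 * f (xj - 3*Δx) + 93 * f (xj - 2*Δx) - 141 * f (xj - Δx) + 71 * f xj)|
      + ξ₂ * |(1/2) * (-3 * f (xj - 3*Δx) + 11 * f (xj - 2*Δx) - 13 * f (xj - Δx) + 5 * f xj)|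
      + |(-f (xj - 3*Δx) + 3 * f (xj - 2*Δx) - 3 * f (xj - Δx) + f xj)|)
    (hβ₃ : ∀ Δx : ℝ, β₃ Δx =
      ξ₁ * |(1/24) * (-23 * f xj + 21 * f (xj + Δx) + 3 * f (xj + 2*Δx) - f (xj + 3*Δx))|
      + ξ₂ * |(1/2) * (3 * f xj - 7 * f (xj + Δx) + 5 * f (xj + 2*Δx) - f (xj + 3*Δx))|
      + |(-f xj + 3 * f (xj + Δx) - 3 * f (xj + 2*Δx) + f (xj + 3*Δx))|) :
    ∃ C δ : ℝ, 0 < C ∧ 0 < δ ∧ ∀ Δx : ℝ, 0 < Δx → Δx < δ →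
      |β₀ Δx - β₃ Δx|^2 ≤ C * Δx^8 := by
  obtain ⟨s, hs, hxs, hf5⟩ := hf
  obtain ⟨M, r, hrpos, hT⟩ := taylor_two_sided hs hf5 hxs
  refine ⟨(4293*(|M|+1))^2, r/3, by positivity, by positivity, ?_⟩
  intro h hpos hlt
  have hMpos : (0:ℝ) < |M| + 1 := by positivity
  have key : ∀ t : ℝ, |t| ≤ r →
      |f (xj + t) - (f xj + iteratedDeriv 1 f xj * t + iteratedDeriv 2 f xj * t^2 / 2
        + iteratedDeriv 3 f xj * t^3 / 6)| ≤ (|M|+1) * t^4 := by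
    intro t ht
    refine (hT t ht).trans ?_
    have h4 : (0:ℝ) ≤ t^4 := by positivity
    nlinarith [le_abs_self M]
  have hBnn : (0:ℝ) ≤ 81*(|M|+1)*h^4 := by positivity
  -- the six evaluation points
  have km3 := key (-(3*h)) (by rw [abs_neg, abs_of_pos (by positivity)]; linarith)
  rw [show xj + -(3*h) = xj - 3*h by ring] at km3
  have bm3 := abs_le.mp (km3.trans (le_of_eq (by ring : (|M|+1)*(-(3*h))^4 = 81*(|M|+1)*h^4)))
  have km2 := key (-(2*h)) (by rw [abs_neg, abs_of_pos (by positivity)]; linarith)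
  rw [show xj + -(2*h) = xj - 2*h by ring] at km2
  have bm2 := abs_le.mp (km2.trans (by nlinarith : (|M|+1)*(-(2*h))^4 ≤ 81*(|M|+1)*h^4))
  have km1 := key (-h) (by rw [abs_neg, abs_of_pos (by positivity)]; linarith)
  rw [show xj + -h = xj - h by ring] at km1
  have bm1 := abs_le.mp (km1.trans (by nlinarith : (|M|+1)*(-h)^4 ≤ 81*(|M|+1)*h^4))
  have kp1 := key h (by rw [abs_of_pos hpos]; linarith)
  have bp1 := abs_le.mp (kp1.trans (by nlinarith : (|M|+1)*h^4 ≤ 81*(|M|+1)*h^4))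
  have kp2 := key (2*h) (by rw [abs_of_pos (by positivity)]; linarith)
  have bp2 := abs_le.mp (kp2.trans (by nlinarith : (|M|+1)*(2*h)^4 ≤ 81*(|M|+1)*h^4))
  have kp3 := key (3*h) (by rw [abs_of_pos (by positivity)]; linarith)
  have bp3 := abs_le.mp (kp3.trans (le_of_eq (by ring : (|M|+1)*(3*h)^4 = 81*(|M|+1)*h^4)))
  -- differences of the undivided differences are O(h^4)
  have hD1 : |(1/24) * (-23 * f (xj - 3*h) + 93 * f (xj - 2*h) - 141 * f (xj - h) + 71 * f xj)
      - (1/24) * (-23 * f xj + 21 * f (xj + h) + 3 * f (xj + 2*h) - f (xj + 3*h))|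
      ≤ 16 * (81*(|M|+1)*h^4) := by
    rw [abs_le]
    constructor <;>
      linarith [bm3.1, bm3.2, bm2.1, bm2.2, bm1.1, bm1.2, bp1.1, bp1.2, bp2.1, bp2.2, bp3.1, bp3.2]
  have hD2 : |(1/2) * (-3 * f (xj - 3*h) + 11 * f (xj - 2*h) - 13 * f (xj - h) + 5 * f xj)
      - (1/2) * (3 * f xj - 7 * f (xj + h) + 5 * f (xj + 2*h) - f (xj + 3*h))|
      ≤ 21 * (81*(|M|+1)*h^4) := by
    rw [abs_le]
    constructor <;>
      linarith [bm3.1, bm3.2, bm2.1, bm2.2, bm1.1, bm1.2, bp1.1, bp1.2, bp2.1, bp2.2, bp3.1, bp3.2]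
  have hD3 : |(-f (xj - 3*h) + 3 * f (xj - 2*h) - 3 * f (xj - h) + f xj)
      - (-f xj + 3 * f (xj + h) - 3 * f (xj + 2*h) + f (xj + 3*h))|
      ≤ 16 * (81*(|M|+1)*h^4) := by
    rw [abs_le]
    constructor <;>
      linarith [bm3.1, bm3.2, bm2.1, bm2.2, bm1.1, bm1.2, bp1.1, bp1.2, bp2.1, bp2.2, bp3.1, bp3.2]
  set A10 := (1/24) * (-23 * f (xj - 3*h) + 93 * f (xj - 2*h) - 141 * f (xj - h) + 71 * f xj) with hA10
  set A20 := (1/2) * (-3 * f (xj - 3*h) + 11 * f (xj - 2*h) - 13 * f (xj - h) + 5 * f xj) with hA20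
  set A30 := (-f (xj - 3*h) + 3 * f (xj - 2*h) - 3 * f (xj - h) + f xj) with hA30
  set A13 := (1/24) * (-23 * f xj + 21 * f (xj + h) + 3 * f (xj + 2*h) - f (xj + 3*h)) with hA13
  set A23 := (1/2) * (3 * f xj - 7 * f (xj + h) + 5 * f (xj + 2*h) - f (xj + 3*h)) with hA23
  set A33 := (-f xj + 3 * f (xj + h) - 3 * f (xj + 2*h) + f (xj + 3*h)) with hA33
  have habs1 : |(|A10| - |A13|)| ≤ 16 * (81*(|M|+1)*h^4) :=
    le_trans (abs_abs_sub_abs_le_abs_sub _ _) hD1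
  have habs2 : |(|A20| - |A23|)| ≤ 21 * (81*(|M|+1)*h^4) :=
    le_trans (abs_abs_sub_abs_le_abs_sub _ _) hD2
  have habs3 : |(|A30| - |A33|)| ≤ 16 * (81*(|M|+1)*h^4) :=
    le_trans (abs_abs_sub_abs_le_abs_sub _ _) hD3
  have hd : |β₀ h - β₃ h| ≤ 4293*(|M|+1)*h^4 := by
    rw [hβ₀ h, hβ₃ h]
    have e1 : ξ₁ * |A10| + ξ₂ * |A20| + |A30| - (ξ₁ * |A13| + ξ₂ * |A23| + |A33|)
        = ξ₁ * (|A10| - |A13|) + ξ₂ * (|A20| - |A23|) + (|A30| - |A33|) := by ring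
    rw [e1]
    calc |ξ₁ * (|A10| - |A13|) + ξ₂ * (|A20| - |A23|) + (|A30| - |A33|)|
        ≤ |ξ₁ * (|A10| - |A13|) + ξ₂ * (|A20| - |A23|)| + |(|A30| - |A33|)| := abs_add_le _ _
      _ ≤ |ξ₁ * (|A10| - |A13|)| + |ξ₂ * (|A20| - |A23|)| + |(|A30| - |A33|)| := by
          linarith [abs_add_le (ξ₁ * (|A10| - |A13|)) (ξ₂ * (|A20| - |A23|))]
      _ = ξ₁ * |(|A10| - |A13|)| + ξ₂ * |(|A20| - |A23|)| + |(|A30| - |A33|)| := by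
          rw [abs_mul ξ₁ (|A10| - |A13|), abs_mul ξ₂ (|A20| - |A23|), abs_of_pos hξ₁.1, abs_of_pos hξ₂.1]
      _ ≤ 4293*(|M|+1)*h^4 := by
          have m1 : ξ₁ * |(|A10| - |A13|)| ≤ |(|A10| - |A13|)| :=
            mul_le_of_le_one_left (abs_nonneg _) hξ₁.2
          have m2 : ξ₂ * |(|A20| - |A23|)| ≤ |(|A20| - |A23|)| :=
            mul_le_of_le_one_left (abs_nonneg _) hξ₂.2
          linarith [habs1, habs2, habs3]
  calc |β₀ h - β₃ h|^2 ≤ (4293*(|M|+1)*h^4)^2 := by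
        exact pow_le_pow_left₀ (abs_nonneg _) hd 2
    _ = (4293*(|M|+1))^2 * h^8 := by ring
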